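/- Let $m \geq 2$ and $\ell \leq m$ with $m - \ell$ even. The number of permutations $\pi \in S_m$ with exactly $\ell$ fixed points and $c(\pi) = (m-\ell)/2$, where $c(\pi) = \sum_{i:\pi(i)>i}(\pi(i)-i)$, equals $\binom{(m+\ell)/2}{\ell}$. Equivalently, these are exactly the permutations that are products of $(m-\ell)/2$ disjoint adjacent transpositions $(i, i+1)$. -/
import Mathlib

open Finset


def NA (n k : ℕ) : Finset (Finset ℕ) :=
  (Finset.range n).powerset.filter (fun S => (∀ i ∈ S, i + 1 ∉ S) ∧ S.card = k)

lemma mem_NA {n k : ℕ} {S : Finset ℕ} :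
    S ∈ NA n k ↔ (∀ x ∈ S, x < n) ∧ (∀ i ∈ S, i + 1 ∉ S) ∧ S.card = k := by
  simp [NA, Finset.subset_iff, Finset.mem_range]

lemma NA_rec (n k : ℕ) :
    (NA (n+1) (k+1)).card = (NA n (k+1)).card + (NA (n-1) k).card := by
  have hsplit := Finset.card_filter_add_card_filter_not
    (s := NA (n+1) (k+1)) (p := fun S => n ∈ S)
  have e1 : ((NA (n+1) (k+1)).filter (fun S => ¬ n ∈ S)) = NA n (k+1) := by
    ext S
    simp only [Finset.mem_filter, mem_NA]
    constructor
    · rintro ⟨⟨hsub, hadj, hcard⟩, hn⟩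
      refine ⟨fun x hx => ?_, hadj, hcard⟩
      have := hsub x hx
      rcases eq_or_ne x n with h | h
      · exact absurd (h ▸ hx) hn
      · omega
    · rintro ⟨hsub, hadj, hcard⟩
      exact ⟨⟨fun x hx => by have := hsub x hx; omega, hadj, hcard⟩,
        fun h => by have := hsub n h; omega⟩
  have e2 : ((NA (n+1) (k+1)).filter (fun S => n ∈ S)).card = (NA (n-1) k).card := by
    refine Finset.card_bij' (fun S _ => S.erase n) (fun T _ => insert n T) ?_ ?_ ?_ ?_
    · intro S hS
      simp only [Finset.mem_filter] at hS
      obtain ⟨hS, hn⟩ := hS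
      rw [mem_NA] at hS ⊢
      obtain ⟨hsub, hadj, hcard⟩ := hS
      refine ⟨?_, ?_, ?_⟩
      · intro x hx
        rw [Finset.mem_erase] at hx
        have h1 := hsub x hx.2
        have h2 : x + 1 ≠ n := fun h => hadj x hx.2 (h ▸ hn)
        omega
      · intro i hi
        rw [Finset.mem_erase] at hi ⊢
        exact fun h => hadj i hi.2 h.2
      · rw [Finset.card_erase_of_mem hn, hcard]
        omega
    · intro T hT
      rw [mem_NA] at hT
      obtain ⟨hsub, hadj, hcard⟩ := hT
      have hnT : n ∉ T := fun h => by have := hsub n h; omega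
      simp only [Finset.mem_filter, Finset.mem_insert, true_or, and_true]
      rw [mem_NA]
      refine ⟨?_, ?_, ?_⟩
      · intro x hx
        rcases Finset.mem_insert.1 hx with h | h
        · omega
        · have := hsub x h; omega
      · intro i hi
        rcases Finset.mem_insert.1 hi with h | h
        · subst h
          intro hc
          rcases Finset.mem_insert.1 hc with h | h
          · omega
          · have := hsub _ h; omega
        · intro hc
          rcases Finset.mem_insert.1 hc with h2 | h2
          · have := hsub _ h; omega
          · exact hadj i h h2
      · rw [Finset.card_insert_of_notMem hnT, hcard]
    · intro S hS
      simp only [Finset.mem_filter] at hS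
      exact Finset.insert_erase hS.2
    · intro T hT
      rw [mem_NA] at hT
      have hnT : n ∉ T := fun h => by have := hT.1 n h; omega
      exact Finset.erase_insert hnT
  rw [e1] at hsplit
  omega

lemma NA_zero (n : ℕ) : (NA n 0).card = 1 := by
  have : NA n 0 = {∅} := by
    ext S
    simp only [mem_NA, Finset.mem_singleton, Finset.card_eq_zero]
    constructor
    · rintro ⟨-, -, h⟩; exact h
    · rintro rfl; simp
  rw [this, Finset.card_singleton]

lemma NA_card (n k : ℕ) : (NA n k).card = (n + 1 - k).choose k := by
  induction n using Nat.strong_induction_on generalizing k with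
  | _ n ih =>
    match n, k with
    | n, 0 => simp [NA_zero]
    | 0, k+1 =>
      have : NA 0 (k+1) = ∅ := by
        ext S
        simp only [mem_NA, Finset.notMem_empty, iff_false, not_and]
        intro hsub hadj hcard
        have : S = ∅ := Finset.eq_empty_of_forall_notMem (fun x hx => by have := hsub x hx; omega)
        simp [this] at hcard
      rw [this]
      simp
    | n+1, k+1 =>
      rw [NA_rec, ih n (by omega), ih (n-1) (by omega)]
      rcases Nat.eq_zero_or_pos n with rfl | hn
      · rcases Nat.eq_zero_or_pos k with rfl | hk
        · simp
        · simp only [Nat.zero_sub]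
          have h1 : 0 + 1 + 1 - (k+1) = 0 := by omega
          have h2 : 0 + 1 - (k+1) = 0 := by omega
          have h3 : 0 + 1 - k = 0 := by omega
          have c1 : Nat.choose 0 (k+1) = 0 := Nat.choose_eq_zero_of_lt (by omega)
          have c2 : Nat.choose 0 k = 0 := Nat.choose_eq_zero_of_lt (by omega)
          rw [h1, h2, h3, c1, c2]
      · rcases le_or_gt k n with hk | hk
        · have h1 : n + 1 + 1 - (k+1) = (n - k) + 1 := by omega
          have h2 : n + 1 - (k+1) = n - k := by omega
          have h3 : n - 1 + 1 - k = n - k := by omega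
          rw [h1, h2, h3, Nat.choose_succ_succ]
          exact add_comm _ _
        · have h1 : n + 1 + 1 - (k+1) = n + 1 - k := by omega
          have h2 : n + 1 - (k+1) = n - k := by omega
          have h3 : n - 1 + 1 - k = n - k := by omega
          rw [h1, h2, h3]
          have e1 : n + 1 - k = 0 := by omega
          have e2 : n - k = 0 := by omega
          have c1 : Nat.choose 0 (k+1) = 0 := Nat.choose_eq_zero_of_lt (by omega)
          have c2 : Nat.choose 0 k = 0 := Nat.choose_eq_zero_of_lt (by omega)
          rw [e1, e2, c1, c2]


lemma perm_structure {m ℓ k : ℕ} (hmk : m = ℓ + 2 * k) (π : Equiv.Perm (Fin m))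
    (hfix : (Finset.univ.filter fun i : Fin m => π i = i).card = ℓ)
    (hsum : ∑ i ∈ Finset.univ.filter (fun i : Fin m => i < π i), ((π i : ℕ) - (i : ℕ)) = k) :
    (∀ i : Fin m, (i:ℕ) < (π i : ℕ) → (π i : ℕ) = (i:ℕ) + 1) ∧
    (∀ i : Fin m, (π i : ℕ) < (i:ℕ) → (π i : ℕ) + 1 = (i:ℕ)) ∧
    (∀ i : Fin m, π (π i) = i) ∧
    (Finset.univ.filter fun i : Fin m => (i:ℕ) < (π i:ℕ)).card = k := by
  classical
  set A : Finset (Fin m) := Finset.univ.filter (fun i : Fin m => (i:ℕ) < (π i:ℕ)) with hAdef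
  set B : Finset (Fin m) := Finset.univ.filter (fun i : Fin m => (π i:ℕ) < (i:ℕ)) with hBdef
  have hAeq : Finset.univ.filter (fun i : Fin m => i < π i) = A := by
    apply Finset.filter_congr; intro i _; exact Fin.lt_def
  have hFeq : (Finset.univ.filter fun i : Fin m => π i = i)
      = Finset.univ.filter (fun i : Fin m => (π i:ℕ) = (i:ℕ)) := by
    apply Finset.filter_congr; intro i _; simp [Fin.ext_iff]
  -- sum over A in ℤ
  have hsumA : ∑ i ∈ A, ((π i : ℤ) - (i : ℤ)) = (k : ℤ) := by
    rw [← hsum, ← hAeq, Nat.cast_sum]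
    apply Finset.sum_congr rfl
    intro i hi
    have hlt : (i:ℕ) < (π i:ℕ) := by
      simp only [hAeq, hAdef, Finset.mem_filter] at hi; exact hi.2
    rw [Nat.cast_sub hlt.le]
  -- total sum is zero
  have htot : ∑ i : Fin m, ((π i : ℤ) - (i : ℤ)) = 0 := by
    rw [Finset.sum_sub_distrib, Equiv.sum_comp π (fun i : Fin m => (i : ℤ)), sub_self]
  -- split complement of A
  have hsplit1 : ∑ i ∈ A, ((π i:ℤ) - i) + ∑ i ∈ Finset.univ.filter (fun i : Fin m => ¬ (i:ℕ) < (π i:ℕ)), ((π i:ℤ) - i) = 0 := by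
    rw [← htot]
    exact Finset.sum_filter_add_sum_filter_not _ _ _
  have hBsub : B = (Finset.univ.filter (fun i : Fin m => ¬ (i:ℕ) < (π i:ℕ))).filter (fun i => (π i:ℕ) < (i:ℕ)) := by
    ext i
    simp only [hBdef, Finset.mem_filter, Finset.mem_univ, true_and]
    omega
  have hsplit2 : ∑ i ∈ Finset.univ.filter (fun i : Fin m => ¬ (i:ℕ) < (π i:ℕ)), ((π i:ℤ) - i)
      = ∑ i ∈ B, ((π i:ℤ) - i) := by
    rw [← Finset.sum_filter_add_sum_filter_not
      (Finset.univ.filter (fun i : Fin m => ¬ (i:ℕ) < (π i:ℕ))) (fun i => (π i:ℕ) < (i:ℕ))]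
    rw [← hBsub]
    have hz : ∑ i ∈ (Finset.univ.filter (fun i : Fin m => ¬ (i:ℕ) < (π i:ℕ))).filter
        (fun i => ¬ (π i:ℕ) < (i:ℕ)), ((π i:ℤ) - i) = 0 := by
      apply Finset.sum_eq_zero
      intro i hi
      simp only [Finset.mem_filter, Finset.mem_univ, true_and] at hi
      have : (π i:ℕ) = (i:ℕ) := by omega
      rw [show ((π i:ℤ)) = ((π i:ℕ):ℤ) from rfl]
      omega
    rw [hz, add_zero]
  have hsumB : ∑ i ∈ B, ((i:ℤ) - (π i:ℤ)) = (k:ℤ) := by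
    have : ∑ i ∈ B, ((i:ℤ) - (π i:ℤ)) = - ∑ i ∈ B, ((π i:ℤ) - i) := by
      rw [← Finset.sum_neg_distrib]
      apply Finset.sum_congr rfl; intro i _; ring
    rw [this]
    rw [hsplit2] at hsplit1
    rw [hsumA] at hsplit1
    omega
  -- cardinalities
  have hcards : A.card + B.card = 2 * k := by
    have h1 := Finset.card_filter_add_card_filter_not
      (s := (Finset.univ : Finset (Fin m))) (p := fun i : Fin m => (i:ℕ) < (π i:ℕ))
    have h2 := Finset.card_filter_add_card_filter_not
      (s := Finset.univ.filter (fun i : Fin m => ¬ (i:ℕ) < (π i:ℕ)))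
      (p := fun i : Fin m => (π i:ℕ) < (i:ℕ))
    have hFc : (Finset.univ.filter (fun i : Fin m => ¬ (i:ℕ) < (π i:ℕ))).filter
        (fun i => ¬ (π i:ℕ) < (i:ℕ)) = Finset.univ.filter (fun i : Fin m => (π i:ℕ) = (i:ℕ)) := by
      ext i
      simp only [Finset.mem_filter, Finset.mem_univ, true_and]
      omega
    rw [hFc] at h2
    rw [← hBsub] at h2
    rw [← hAdef] at h1
    rw [hFeq] at hfix
    have hu : (Finset.univ : Finset (Fin m)).card = m := by simp
    omega
  have hAcard_le : (A.card : ℤ) ≤ k := by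
    rw [← hsumA]
    have := Finset.card_nsmul_le_sum A (fun i => ((π i:ℤ) - i)) 1
      (fun i hi => by
        simp only [hAdef, Finset.mem_filter, Finset.mem_univ, true_and] at hi
        try dsimp only
        omega)
    simpa using this
  have hBcard_le : (B.card : ℤ) ≤ k := by
    rw [← hsumB]
    have := Finset.card_nsmul_le_sum B (fun i => ((i:ℤ) - π i)) 1
      (fun i hi => by
        simp only [hBdef, Finset.mem_filter, Finset.mem_univ, true_and] at hi
        try dsimp only
        omega)
    simpa using this
  have hAcard : A.card = k := by omega
  have hBcard : B.card = k := by omega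
  -- each term is exactly 1
  have hA1 : ∀ i ∈ A, (π i:ℤ) - i = 1 := by
    have h0 : ∑ i ∈ A, ((π i:ℤ) - i - 1) = 0 := by
      rw [Finset.sum_sub_distrib, hsumA, Finset.sum_const, hAcard]
      simp
    intro i hi
    have := (Finset.sum_eq_zero_iff_of_nonneg (fun j hj => by
      simp only [hAdef, Finset.mem_filter, Finset.mem_univ, true_and] at hj
      try dsimp only
      omega)).1 h0 i hi
    try dsimp only at this
    omega
  have hB1 : ∀ i ∈ B, (i:ℤ) - π i = 1 := by
    have h0 : ∑ i ∈ B, ((i:ℤ) - π i - 1) = 0 := by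
      rw [Finset.sum_sub_distrib, hsumB, Finset.sum_const, hBcard]
      simp
    intro i hi
    have := (Finset.sum_eq_zero_iff_of_nonneg (fun j hj => by
      simp only [hBdef, Finset.mem_filter, Finset.mem_univ, true_and] at hj
      try dsimp only
      omega)).1 h0 i hi
    try dsimp only at this
    omega
  have part1 : ∀ i : Fin m, (i:ℕ) < (π i : ℕ) → (π i : ℕ) = (i:ℕ) + 1 := by
    intro i hlt
    have hi : i ∈ A := by
      simp only [hAdef, Finset.mem_filter, Finset.mem_univ, true_and]; exact hlt
    have := hA1 i hi
    omega
  have part2 : ∀ i : Fin m, (π i : ℕ) < (i:ℕ) → (π i : ℕ) + 1 = (i:ℕ) := by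
    intro i hlt
    have hi : i ∈ B := by
      simp only [hBdef, Finset.mem_filter, Finset.mem_univ, true_and]; exact hlt
    have := hB1 i hi
    omega
  -- pairing on A
  have pairA : ∀ t : ℕ, ∀ i : Fin m, m - (i:ℕ) ≤ t → (i:ℕ) < (π i:ℕ) → π (π i) = i := by
    intro t
    induction t with
    | zero => intro i h hlt; exfalso; have := i.isLt; omega
    | succ t ih =>
      intro i h hlt
      have h1 : (π i:ℕ) = (i:ℕ) + 1 := part1 i hlt
      rcases lt_trichotomy ((π (π i)):ℕ) ((π i:ℕ)) with hc | hc | hc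
      · have h2 := part2 (π i) hc
        exact Fin.ext (by omega)
      · exfalso
        have heq : π (π i) = π i := Fin.ext hc
        have := π.injective heq
        have : (π i : ℕ) = (i:ℕ) := congrArg Fin.val this
        omega
      · have hrec := ih (π i) (by omega) hc
        exact π.injective hrec
  have pairA' : ∀ i : Fin m, (i:ℕ) < (π i:ℕ) → π (π i) = i :=
    fun i hlt => pairA (m - (i:ℕ)) i le_rfl hlt
  -- pairing on B via surjectivity
  have hmapAB : ∀ i ∈ A, π i ∈ B := by
    intro i hi
    simp only [hAdef, Finset.mem_filter, Finset.mem_univ, true_and] at hi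
    have := pairA' i hi
    simp only [hBdef, Finset.mem_filter, Finset.mem_univ, true_and]
    rw [this]
    exact hi
  have hsurj := Finset.surj_on_of_inj_on_of_card_le (s := A) (t := B)
    (fun i _ => π i) (fun i hi => hmapAB i hi)
    (fun i j _ _ hij => π.injective hij) (by omega)
  have pairB : ∀ i : Fin m, (π i:ℕ) < (i:ℕ) → π (π i) = i := by
    intro i hlt
    have hiB : i ∈ B := by
      simp only [hBdef, Finset.mem_filter, Finset.mem_univ, true_and]; exact hlt
    obtain ⟨a, ha, hai⟩ := hsurj i hiB
    have hai' : i = π a := hai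
    have haA : (a:ℕ) < (π a:ℕ) := by
      simp only [hAdef, Finset.mem_filter, Finset.mem_univ, true_and] at ha
      exact ha
    have hpa := pairA' a haA
    rw [hai', hpa]
  have part3 : ∀ i : Fin m, π (π i) = i := by
    intro i
    rcases lt_trichotomy ((i:ℕ)) ((π i:ℕ)) with hc | hc | hc
    · exact pairA' i hc
    · have : π i = i := Fin.ext hc.symm
      rw [this, this]
    · exact pairB i hc
  exact ⟨part1, part2, part3, hAcard⟩


def adjFun (m : ℕ) (S : Finset ℕ) : Fin m → Fin m := fun i =>
  if h : (i:ℕ) ∈ S ∧ (i:ℕ) + 1 < m then ⟨(i:ℕ)+1, h.2⟩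
  else if _h2 : 1 ≤ (i:ℕ) ∧ (i:ℕ) - 1 ∈ S then
    ⟨(i:ℕ)-1, lt_of_le_of_lt (Nat.sub_le _ _) i.isLt⟩
  else i

lemma adjFun_val1 {m : ℕ} {S : Finset ℕ} {i : Fin m} (h : (i:ℕ) ∈ S ∧ (i:ℕ) + 1 < m) :
    ((adjFun m S i : Fin m) : ℕ) = (i:ℕ) + 1 := by
  simp only [adjFun, dif_pos h]

lemma adjFun_val2 {m : ℕ} {S : Finset ℕ} {i : Fin m} (h : ¬((i:ℕ) ∈ S ∧ (i:ℕ) + 1 < m))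
    (h2 : 1 ≤ (i:ℕ) ∧ (i:ℕ) - 1 ∈ S) :
    ((adjFun m S i : Fin m) : ℕ) = (i:ℕ) - 1 := by
  simp only [adjFun, dif_neg h, dif_pos h2]

lemma adjFun_val3 {m : ℕ} {S : Finset ℕ} {i : Fin m} (h : ¬((i:ℕ) ∈ S ∧ (i:ℕ) + 1 < m))
    (h2 : ¬(1 ≤ (i:ℕ) ∧ (i:ℕ) - 1 ∈ S)) :
    adjFun m S i = i := by
  simp only [adjFun, dif_neg h, dif_neg h2]

lemma adjFun_inv {m : ℕ} {S : Finset ℕ} (hadj : ∀ i ∈ S, i + 1 ∉ S) :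
    Function.Involutive (adjFun m S) := by
  intro i
  by_cases h : (i:ℕ) ∈ S ∧ (i:ℕ) + 1 < m
  · have e1 : adjFun m S i = ⟨(i:ℕ)+1, h.2⟩ := by
      apply Fin.ext; rw [adjFun_val1 h]
    rw [e1]
    apply Fin.ext
    have hn : ¬(((⟨(i:ℕ)+1, h.2⟩ : Fin m) : ℕ) ∈ S ∧ ((⟨(i:ℕ)+1, h.2⟩ : Fin m) : ℕ) + 1 < m) := by
      intro hc
      exact hadj _ h.1 hc.1
    have h2 : 1 ≤ ((⟨(i:ℕ)+1, h.2⟩ : Fin m) : ℕ) ∧ ((⟨(i:ℕ)+1, h.2⟩ : Fin m) : ℕ) - 1 ∈ S := by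
      constructor
      · simp
      · simpa using h.1
    rw [adjFun_val2 hn h2]
    simp
  · by_cases h2 : 1 ≤ (i:ℕ) ∧ (i:ℕ) - 1 ∈ S
    · have e1 : adjFun m S i = ⟨(i:ℕ)-1, lt_of_le_of_lt (Nat.sub_le _ _) i.isLt⟩ := by
        apply Fin.ext; rw [adjFun_val2 h h2]
      rw [e1]
      apply Fin.ext
      have hp : ((⟨(i:ℕ)-1, lt_of_le_of_lt (Nat.sub_le _ _) i.isLt⟩ : Fin m) : ℕ) ∈ S ∧
          ((⟨(i:ℕ)-1, lt_of_le_of_lt (Nat.sub_le _ _) i.isLt⟩ : Fin m) : ℕ) + 1 < m := by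
      
        refine ⟨h2.2, ?_⟩
        have := i.isLt
        show (i:ℕ) - 1 + 1 < m
        omega
      rw [adjFun_val1 hp]
      have := h2.1
      show (i:ℕ) - 1 + 1 = (i:ℕ)
      omega
    · rw [adjFun_val3 h h2, adjFun_val3 h h2]


def Sof {m : ℕ} (π : Equiv.Perm (Fin m)) : Finset ℕ :=
  Finset.image (fun i : Fin m => (i:ℕ)) (Finset.univ.filter (fun i : Fin m => (i:ℕ) < (π i:ℕ)))

lemma mem_Sof {m : ℕ} {π : Equiv.Perm (Fin m)} {i : Fin m} :
    (i:ℕ) ∈ Sof π ↔ (i:ℕ) < (π i:ℕ) := by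
  simp only [Sof, Finset.mem_image, Finset.mem_filter, Finset.mem_univ, true_and]
  constructor
  · rintro ⟨j, hj, hji⟩
    rwa [show j = i from Fin.ext hji] at hj
  · exact fun h => ⟨i, h, rfl⟩

def adjPerm {m : ℕ} (S : Finset ℕ) (hadj : ∀ i ∈ S, i + 1 ∉ S) : Equiv.Perm (Fin m) :=
  Function.Involutive.toPerm _ (adjFun_inv hadj)

lemma adjPerm_apply {m : ℕ} (S : Finset ℕ) (hadj : ∀ i ∈ S, i + 1 ∉ S) (i : Fin m) :
    adjPerm S hadj i = adjFun m S i := rfl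

lemma adjPerm_props {m ℓ k : ℕ} (hm : 1 ≤ m) (hmk : m = ℓ + 2 * k) (S : Finset ℕ)
    (hS : S ∈ NA (m-1) k) :
    ((Finset.univ.filter fun i : Fin m =>
        adjPerm (m := m) S (mem_NA.1 hS).2.1 i = i).card = ℓ ∧
     ∑ i ∈ Finset.univ.filter
        (fun i : Fin m => i < adjPerm (m := m) S (mem_NA.1 hS).2.1 i),
        ((adjPerm (m := m) S (mem_NA.1 hS).2.1 i : ℕ) - (i : ℕ)) = k) ∧
    Sof (adjPerm (m := m) S (mem_NA.1 hS).2.1) = S := by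
  obtain ⟨hsub, hadj, hcard⟩ := mem_NA.1 hS
  set π : Equiv.Perm (Fin m) := adjPerm (m := m) S (mem_NA.1 hS).2.1 with hπ
  have ev1 : ∀ i : Fin m, (i:ℕ) ∈ S → (π i : ℕ) = (i:ℕ)+1 := fun i hi =>
    adjFun_val1 ⟨hi, by have := hsub _ hi; omega⟩
  have ev2 : ∀ i : Fin m, (i:ℕ) ∉ S → 1 ≤ (i:ℕ) → (i:ℕ)-1 ∈ S → (π i:ℕ) = (i:ℕ)-1 :=
    fun i h1 h2 h3 => adjFun_val2 (fun hc => h1 hc.1) ⟨h2,h3⟩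
  have ev3 : ∀ i : Fin m, (i:ℕ) ∉ S → ¬(1 ≤ (i:ℕ) ∧ (i:ℕ)-1 ∈ S) → π i = i :=
    fun i h1 h2 => adjFun_val3 (fun hc => h1 hc.1) h2
  have hAfilter : Finset.univ.filter (fun i : Fin m => i < π i)
      = Finset.univ.filter (fun i : Fin m => (i:ℕ) ∈ S) := by
    ext i
    simp only [Finset.mem_filter, Finset.mem_univ, true_and, Fin.lt_def]
    constructor
    · intro hlt
      by_contra hiS
      by_cases h2 : 1 ≤ (i:ℕ) ∧ (i:ℕ)-1 ∈ S
      · have := ev2 i hiS h2.1 h2.2; omega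
      · have := ev3 i hiS h2
        have := congrArg Fin.val this
        omega
    · intro hiS; have := ev1 i hiS; omega
  have hcardA : (Finset.univ.filter (fun i : Fin m => (i:ℕ) ∈ S)).card = k := by
    rw [← hcard]
    refine Finset.card_bij' (s := Finset.univ.filter (fun i : Fin m => (i:ℕ) ∈ S)) (t := S)
      (fun i _ => (i:ℕ))
      (fun x hx => (⟨x, by have := hsub x hx; omega⟩ : Fin m)) ?_ ?_ ?_ ?_
    · intro i hi
      exact (Finset.mem_filter.1 hi).2
    · intro x hx
      simp only [Finset.mem_filter, Finset.mem_univ, true_and]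
      exact hx
    · intro i _; exact Fin.ext rfl
    · intro x _; rfl
  have hcardB : (Finset.univ.filter (fun i : Fin m => 1 ≤ (i:ℕ) ∧ (i:ℕ)-1 ∈ S)).card = k := by
    rw [← hcard]
    refine Finset.card_bij'
      (s := Finset.univ.filter (fun i : Fin m => 1 ≤ (i:ℕ) ∧ (i:ℕ)-1 ∈ S)) (t := S)
      (fun i _ => (i:ℕ) - 1)
      (fun x hx => (⟨x+1, by have := hsub x hx; omega⟩ : Fin m)) ?_ ?_ ?_ ?_
    · intro i hi
      exact (Finset.mem_filter.1 hi).2.2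
    · intro x hx
      simp only [Finset.mem_filter, Finset.mem_univ, true_and]
      refine ⟨by simp, ?_⟩
      show (x + 1) - 1 ∈ S
      simpa using hx
    · intro i hi
      have h1 := (Finset.mem_filter.1 hi).2.1
      apply Fin.ext
      show (i:ℕ) - 1 + 1 = (i:ℕ)
      omega
    · intro x _
      show (x + 1) - 1 = x
      omega
  have hdisj : Disjoint (Finset.univ.filter (fun i : Fin m => (i:ℕ) ∈ S))
      (Finset.univ.filter (fun i : Fin m => 1 ≤ (i:ℕ) ∧ (i:ℕ)-1 ∈ S)) := by
    rw [Finset.disjoint_left]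
    intro i hi1 hi2
    simp only [Finset.mem_filter, Finset.mem_univ, true_and] at hi1 hi2
    have := hadj ((i:ℕ)-1) hi2.2
    have : (i:ℕ)-1+1 = (i:ℕ) := by omega
    exact hadj ((i:ℕ)-1) hi2.2 (by rwa [this])
  have hnotfix : Finset.univ.filter (fun i : Fin m => ¬ π i = i)
      = Finset.univ.filter (fun i : Fin m => (i:ℕ) ∈ S)
        ∪ Finset.univ.filter (fun i : Fin m => 1 ≤ (i:ℕ) ∧ (i:ℕ)-1 ∈ S) := by
    ext i
    simp only [Finset.mem_filter, Finset.mem_univ, true_and, Finset.mem_union]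
    constructor
    · intro hne
      by_contra hc
      push_neg at hc
      exact hne (ev3 i hc.1 (fun h => hc.2 h.1 h.2))
    · rintro (h | h)
      · have := ev1 i h
        intro he
        have := congrArg Fin.val he
        omega
      · have hiS : (i:ℕ) ∉ S := by
          intro hin
          have heq : (i:ℕ)-1+1 = (i:ℕ) := by omega
          exact hadj ((i:ℕ)-1) h.2 (by rwa [heq])
        have := ev2 i hiS h.1 h.2
        intro he
        have := congrArg Fin.val he
        omega
  have hfixcard : (Finset.univ.filter fun i : Fin m => π i = i).card = ℓ := by
    have h1 := Finset.card_filter_add_card_filter_not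
      (s := (Finset.univ : Finset (Fin m))) (p := fun i : Fin m => π i = i)
    rw [hnotfix, Finset.card_union_of_disjoint hdisj, hcardA, hcardB] at h1
    have hu : (Finset.univ : Finset (Fin m)).card = m := by simp
    omega
  have hsump : ∑ i ∈ Finset.univ.filter (fun i : Fin m => i < π i),
      ((π i : ℕ) - (i : ℕ)) = k := by
    rw [hAfilter]
    rw [Finset.sum_congr rfl (fun i hi => by
      have hiS : (i:ℕ) ∈ S := (Finset.mem_filter.1 hi).2
      have := ev1 i hiS
      show (π i : ℕ) - (i:ℕ) = 1
      omega)]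
    rw [Finset.sum_const, hcardA, smul_eq_mul, mul_one]
  refine ⟨⟨hfixcard, hsump⟩, ?_⟩
  have hvalfilter : Finset.univ.filter (fun i : Fin m => (i:ℕ) < (π i:ℕ))
      = Finset.univ.filter (fun i : Fin m => i < π i) := by
    apply Finset.filter_congr; intro i _; exact Fin.lt_def.symm
  rw [Sof, hvalfilter, hAfilter]
  ext x
  simp only [Finset.mem_image, Finset.mem_filter, Finset.mem_univ, true_and]
  constructor
  · rintro ⟨j, hj, rfl⟩; exact hj
  · intro hx
    exact ⟨⟨x, by have := hsub x hx; omega⟩, hx, rfl⟩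

lemma Sof_mem_NA {m ℓ k : ℕ} (hmk : m = ℓ + 2 * k) (π : Equiv.Perm (Fin m))
    (hfix : (Finset.univ.filter fun i : Fin m => π i = i).card = ℓ)
    (hsum : ∑ i ∈ Finset.univ.filter (fun i : Fin m => i < π i), ((π i : ℕ) - (i : ℕ)) = k) :
    Sof π ∈ NA (m-1) k := by
  obtain ⟨p1, p2, p3, p4⟩ := perm_structure hmk π hfix hsum
  rw [mem_NA]
  refine ⟨?_, ?_, ?_⟩
  · intro x hx
    simp only [Sof, Finset.mem_image, Finset.mem_filter, Finset.mem_univ, true_and] at hx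
    obtain ⟨i, hi, rfl⟩ := hx
    have := p1 i hi
    have := (π i).isLt
    omega
  · intro x hx hx1
    simp only [Sof, Finset.mem_image, Finset.mem_filter, Finset.mem_univ, true_and] at hx hx1
    obtain ⟨i, hi, rfl⟩ := hx
    obtain ⟨j, hj, hjv⟩ := hx1
    have hpi := p1 i hi
    have hpj := p1 j hj
    have hij : π i = j := Fin.ext (by omega)
    have := p3 i
    rw [hij] at this
    have := congrArg Fin.val this
    omega
  · rw [Sof, Finset.card_image_of_injective _ Fin.val_injective]
    exact p4

lemma adjPerm_Sof {m ℓ k : ℕ} (hmk : m = ℓ + 2 * k) (π : Equiv.Perm (Fin m))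
    (hfix : (Finset.univ.filter fun i : Fin m => π i = i).card = ℓ)
    (hsum : ∑ i ∈ Finset.univ.filter (fun i : Fin m => i < π i), ((π i : ℕ) - (i : ℕ)) = k)
    (hadj : ∀ i ∈ Sof π, i + 1 ∉ Sof π) :
    adjPerm (Sof π) hadj = π := by
  obtain ⟨p1, p2, p3, _⟩ := perm_structure hmk π hfix hsum
  apply Equiv.ext
  intro i
  show adjFun m (Sof π) i = π i
  rcases lt_trichotomy ((i:ℕ)) ((π i:ℕ)) with hc | hc | hc
  · apply Fin.ext
    rw [adjFun_val1 ⟨mem_Sof.2 hc, by have := (π i).isLt; have := p1 i hc; omega⟩]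
    exact (p1 i hc).symm
  · have hfixi : π i = i := Fin.ext hc.symm
    rw [hfixi]
    apply adjFun_val3
    · intro hcon
      have := mem_Sof.1 hcon.1
      omega
    · rintro ⟨h1, h2⟩
      simp only [Sof, Finset.mem_image, Finset.mem_filter, Finset.mem_univ, true_and] at h2
      obtain ⟨j, hj, hjv⟩ := h2
      have hpj := p1 j hj
      have hji : π j = i := Fin.ext (by omega)
      have : j = i := π.injective (by rw [hji, hfixi])
      have := congrArg Fin.val this
      omega
  · apply Fin.ext
    have h2 := p2 i hc
    have hπiS : ((π i : Fin m) : ℕ) ∈ Sof π := by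
      apply mem_Sof.2
      rw [p3 i]
      omega
    have hn : ¬((i:ℕ) ∈ Sof π ∧ (i:ℕ) + 1 < m) := by
      intro hcon
      have := mem_Sof.1 hcon.1
      omega
    have hmem : (i:ℕ) - 1 ∈ Sof π := by
      have he : (i:ℕ) - 1 = ((π i : Fin m) : ℕ) := by omega
      rw [he]; exact hπiS
    rw [adjFun_val2 hn ⟨by omega, hmem⟩]
    omega

lemma main_count (m ℓ k : ℕ) (hm : 1 ≤ m) (hmk : m = ℓ + 2 * k) :
    Nat.card {π : Equiv.Perm (Fin m) //
        (Finset.univ.filter fun i : Fin m => π i = i).card = ℓ ∧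
        ∑ i ∈ Finset.univ.filter (fun i : Fin m => i < π i), ((π i : ℕ) - (i : ℕ)) = k} =
      (k + ℓ).choose ℓ := by
  have e : {π : Equiv.Perm (Fin m) //
        (Finset.univ.filter fun i : Fin m => π i = i).card = ℓ ∧
        ∑ i ∈ Finset.univ.filter (fun i : Fin m => i < π i), ((π i : ℕ) - (i : ℕ)) = k}
      ≃ {S : Finset ℕ // S ∈ NA (m-1) k} :=
    { toFun := fun p => ⟨Sof p.1, Sof_mem_NA hmk p.1 p.2.1 p.2.2⟩
      invFun := fun s => ⟨adjPerm (m := m) s.1 (mem_NA.1 s.2).2.1,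
        (adjPerm_props hm hmk s.1 s.2).1⟩
      left_inv := fun p => Subtype.ext (adjPerm_Sof hmk p.1 p.2.1 p.2.2
        ((mem_NA.1 (Sof_mem_NA hmk p.1 p.2.1 p.2.2)).2.1))
      right_inv := fun s => Subtype.ext ((adjPerm_props hm hmk s.1 s.2).2) }
  rw [Nat.card_congr e, Nat.card_eq_finsetCard, NA_card]
  have h1 : m - 1 + 1 - k = k + ℓ := by omega
  rw [h1]
  have h2 := Nat.choose_symm (show k ≤ k + ℓ by omega)
  have h3 : k + ℓ - k = ℓ := by omega
  rw [h3] at h2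
  exact h2.symm

/-- For `m ≥ 2` and `ℓ ≤ m` with `m - ℓ` even, the number of permutations `π ∈ S_m` with
exactly `ℓ` fixed points and `c(π) = (m - ℓ)/2`, where `c(π) = ∑_{i : π(i) > i} (π(i) - i)`,
equals `C((m+ℓ)/2, ℓ)`. -/
theorem count_minimal_perms_even (m ℓ : ℕ) (hm : 2 ≤ m) (hl : ℓ ≤ m)
    (hpar : Even (m - ℓ)) :
    Nat.card {π : Equiv.Perm (Fin m) //
        (Finset.univ.filter fun i : Fin m => π i = i).card = ℓ ∧
        ∑ i ∈ Finset.univ.filter (fun i : Fin m => i < π i), ((π i : ℕ) - (i : ℕ)) =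
          (m - ℓ) / 2} =
      ((m + ℓ) / 2).choose ℓ := by
  obtain ⟨k, hk⟩ := hpar
  have h2 : (m - ℓ) / 2 = k := by omega
  have h3 : (m + ℓ) / 2 = k + ℓ := by omega
  rw [h2, h3]
  exact main_count m ℓ k (by omega) (by omega)
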